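/- Let G be a group that is nilpotent of class at most 3 (i.e. every triple commutator ⁅⁅x,y⁆,z⁆ lies in the center Z(G)), and let a ∈ G. Then (x∘a)∘y = x∘(a∘y) for all x, y ∈ G if and only if ⁅x, ⁅a, y⁻¹⁆⁆ = 1 for all x, y ∈ G, where x∘y = y⁻¹xy² and ⁅u,v⁆ = uvu⁻¹v⁻¹. (This characterizes membership in the middle nucleus N_μ(°G).) -/

import Mathlib

open scoped commutatorElement

/-- The gyrogroup operation associated with a group: `x ∘ y = y⁻¹ * x * y²`. -/
def gyrOp {G : Type*} [Group G] (x y : G) : G := y⁻¹ * x * y ^ 2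

theorem mem_middleNucleus_iff {G : Type*} [Group G]
    (h3 : ∀ x y z : G, ⁅⁅x, y⁆, z⁆ ∈ Subgroup.center G) (a : G) :
    (∀ x y : G, gyrOp (gyrOp x a) y = gyrOp x (gyrOp a y)) ↔
      (∀ x y : G, ⁅x, ⁅a, y⁻¹⁆⁆ = 1) := by
  have key : ∀ x y : G, gyrOp (gyrOp x a) y = gyrOp x (gyrOp a y) ↔ ⁅x, ⁅a, y⁻¹⁆⁆ = 1 := by
    intro x y
    set c := ⁅a, y⁻¹⁆ with hc
    rw [commutatorElement_eq_one_iff_mul_comm]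
    have hA : gyrOp (gyrOp x a) y = (a * y)⁻¹ * x * (a ^ 2 * y ^ 2) := by
      simp only [gyrOp]; group
    have hB : gyrOp x (gyrOp a y) = (a * y)⁻¹ * (c * x * c⁻¹) * (a ^ 2 * y ^ 2) := by
      simp only [gyrOp, hc, commutatorElement_def, sq]; group
    rw [hA, hB]
    constructor
    · intro h
      have h2 : x = c * x * c⁻¹ := mul_left_cancel (mul_right_cancel h)
      calc x * c = (c * x * c⁻¹) * c := by rw [← h2]
        _ = c * x := by group
    · intro h
      have h2 : c * x * c⁻¹ = x := by rw [← h]; group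
      rw [h2]
  constructor
  · intro h x y; exact (key x y).mp (h x y)
  · intro h x y; exact (key x y).mpr (h x y)
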